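/- For φ ∈ L^p(Ω;M), φ is (a.e. equal to) a ℬ-measurable function in L^p(Ω,ℬ,P;M) if and only if E_ℬ^β(φ) = φ almost everywhere. In particular E_ℬ^β is idempotent: E_ℬ^β(E_ℬ^β(φ)) = E_ℬ^β(φ). -/

import Mathlib

open MeasureTheory ENNReal Filter Topology

noncomputable section

variable {Ω M : Type*}

/-- A coupling of two measures on `M`. -/
def IsCoupling [MeasurableSpace M] (π : MeasureTheory.Measure (M × M))
    (μ ν : MeasureTheory.Measure M) : Prop :=
  π.map Prod.fst = μ ∧ π.map Prod.snd = ν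

/-- The `p`-Wasserstein (extended) distance between two measures. -/
def wassDist [MeasurableSpace M] [PseudoEMetricSpace M] (p : ℝ)
    (μ ν : MeasureTheory.Measure M) : ℝ≥0∞ :=
  ⨅ (π : MeasureTheory.Measure (M × M)) (_ : IsCoupling π μ ν),
    (∫⁻ xy, edist xy.1 xy.2 ^ p ∂π) ^ (1 / p)

/-- Finite `p`-th moment. -/
def HasFinitePMoment [MeasurableSpace M] [PseudoEMetricSpace M] (p : ℝ)
    (μ : MeasureTheory.Measure M) : Prop :=
  ∀ x : M, ∫⁻ y, edist x y ^ p ∂μ < ⊤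

/-- `p`-th Bochner integrability of an `M`-valued function. -/
def PIntegrable {mΩ : MeasurableSpace Ω} [PseudoEMetricSpace M] (p : ℝ)
    (P : MeasureTheory.Measure Ω) (φ : Ω → M) : Prop :=
  MeasureTheory.AEStronglyMeasurable φ P ∧ ∀ x : M, ∫⁻ ω, edist x (φ ω) ^ p ∂P < ⊤

/-- A `p`-contractive barycentric map. -/
structure IsBarycentric [MeasurableSpace M] [PseudoEMetricSpace M] (p : ℝ)
    (β : MeasureTheory.Measure M → M) : Prop where
  map_dirac : ∀ x : M, β (MeasureTheory.Measure.dirac x) = x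
  contract : ∀ μ ν : MeasureTheory.Measure M, MeasureTheory.IsProbabilityMeasure μ →
    MeasureTheory.IsProbabilityMeasure ν → HasFinitePMoment p μ → HasFinitePMoment p ν →
    edist (β μ) (β ν) ≤ wassDist p μ ν

/-- A disintegration of `P` with respect to the sub-σ-algebra `ℬ`:
a family of probability measures `K ω` (on the ambient σ-algebra) such that for
every measurable `A`, `ω ↦ K ω A` is `ℬ`-measurable and is a version of the
conditional expectation of the indicator of `A` with respect to `ℬ`. -/
def IsDisintegration {mΩ : MeasurableSpace Ω} (P : @MeasureTheory.Measure Ω mΩ)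
    (ℬ : MeasurableSpace Ω) (K : Ω → @MeasureTheory.Measure Ω mΩ) : Prop :=
  (∀ ω, MeasureTheory.IsProbabilityMeasure (K ω)) ∧
  ∀ A : Set Ω, MeasurableSet[mΩ] A →
    Measurable[ℬ] (fun ω => (K ω A).toReal) ∧
    (fun ω => (K ω A).toReal) =ᵐ[P] P[A.indicator (fun _ => (1 : ℝ)) | ℬ]

/-- The `β`-conditional expectation `ω ↦ β (φ_* P_ω)` defined from a
disintegration `K` of `P`. -/
def condBary {mΩ : MeasurableSpace Ω} [MeasurableSpace M] [PseudoEMetricSpace M]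
    (β : MeasureTheory.Measure M → M) (K : Ω → @MeasureTheory.Measure Ω mΩ)
    (φ : Ω → M) (ω : Ω) : M :=
  β ((K ω).map φ)

namespace StmtAux

variable {ℬ : MeasurableSpace Ω} {mΩ : MeasurableSpace Ω} {P : Measure Ω}
  {K : Ω → Measure Ω}

lemma measurable_K (hK : IsDisintegration P ℬ K)
    {A : Set Ω} (hA : MeasurableSet[mΩ] A) :
    Measurable[ℬ] fun ω => K ω A := by
  have h := (hK.2 A hA).1
  have heq : (fun ω => K ω A) = fun ω => ENNReal.ofReal ((K ω A).toReal) := by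
    funext ω
    haveI := hK.1 ω
    rw [ENNReal.ofReal_toReal (measure_ne_top _ _)]
  rw [heq]
  exact ENNReal.measurable_ofReal.comp h

lemma lintegral_K (hℬ : ℬ ≤ mΩ) [IsProbabilityMeasure P]
    (hK : IsDisintegration P ℬ K) {A : Set Ω} (hA : MeasurableSet[mΩ] A) :
    ∫⁻ ω, K ω A ∂P = P A := by
  haveI : IsFiniteMeasure (P.trim hℬ) := isFiniteMeasure_trim hℬ
  have hmeas : Measurable[mΩ] fun ω => (K ω A).toReal := ((hK.2 A hA).1).mono hℬ le_rfl
  have hnonneg : 0 ≤ᶠ[ae P] fun ω => (K ω A).toReal :=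
    Filter.Eventually.of_forall fun ω => ENNReal.toReal_nonneg
  have hint : Integrable (fun ω => (K ω A).toReal) P := by
    refine (integrable_const (1:ℝ)).mono' hmeas.aestronglyMeasurable ?_
    refine Filter.Eventually.of_forall fun ω => ?_
    haveI := hK.1 ω
    rw [Real.norm_eq_abs, abs_of_nonneg ENNReal.toReal_nonneg]
    simpa using ENNReal.toReal_mono one_ne_top prob_le_one
  have h1 : ∫ ω, (K ω A).toReal ∂P = ∫ ω, A.indicator (fun _ => (1:ℝ)) ω ∂P := by
    rw [integral_congr_ae (hK.2 A hA).2]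
    exact integral_condExp hℬ
  have h2 : ∫ ω, A.indicator (fun _ => (1:ℝ)) ω ∂P = (P A).toReal := by
    rw [integral_indicator_const _ hA]; simp [measureReal_def]
  calc ∫⁻ ω, K ω A ∂P = ∫⁻ ω, ENNReal.ofReal ((K ω A).toReal) ∂P := by
        refine lintegral_congr fun ω => ?_
        haveI := hK.1 ω
        rw [ENNReal.ofReal_toReal (measure_ne_top _ _)]
    _ = ENNReal.ofReal (∫ ω, (K ω A).toReal ∂P) :=
        (ofReal_integral_eq_lintegral_ofReal hint hnonneg).symm
    _ = ENNReal.ofReal ((P A).toReal) := by rw [h1, h2]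
    _ = P A := ENNReal.ofReal_toReal (measure_ne_top _ _)

lemma K_null (hℬ : ℬ ≤ mΩ) [IsProbabilityMeasure P]
    (hK : IsDisintegration P ℬ K) {N : Set Ω} (hN : MeasurableSet[mΩ] N)
    (h0 : P N = 0) : ∀ᵐ ω ∂P, K ω N = 0 := by
  have h := lintegral_K hℬ hK hN
  rw [h0] at h
  have hm : Measurable[mΩ] fun ω => K ω N := (measurable_K hK hN).mono hℬ le_rfl
  rw [lintegral_eq_zero_iff hm] at h
  filter_upwards [h] with ω hω using hω

lemma map_congr_K {M : Type*} [MeasurableSpace M] (hℬ : ℬ ≤ mΩ) [IsProbabilityMeasure P]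
    (hK : IsDisintegration P ℬ K) {g ψ : Ω → M} (h : g =ᵐ[P] ψ) :
    ∀ᵐ ω ∂P, (K ω).map g = (K ω).map ψ := by
  have h0 : P {x | g x ≠ ψ x} = 0 := h
  obtain ⟨N, hsub, hNm, hN0⟩ := exists_measurable_superset_of_null h0
  filter_upwards [K_null hℬ hK hNm hN0] with ω hω
  exact Measure.map_congr (measure_mono_null hsub hω)

lemma K_indicator (hℬ : ℬ ≤ mΩ) [IsProbabilityMeasure P]
    (hK : IsDisintegration P ℬ K) {A : Set Ω} (hA : MeasurableSet[ℬ] A) :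
    ∀ᵐ ω ∂P, K ω A = Set.indicator A (fun _ => (1:ℝ≥0∞)) ω := by
  haveI : IsFiniteMeasure (P.trim hℬ) := isFiniteMeasure_trim hℬ
  have hA' : MeasurableSet[mΩ] A := hℬ A hA
  have hsm : StronglyMeasurable[ℬ] (A.indicator fun _ => (1:ℝ)) :=
    (stronglyMeasurable_const : StronglyMeasurable[ℬ] fun _ : Ω => (1:ℝ)).indicator hA
  have hint : Integrable (A.indicator fun _ => (1:ℝ)) P := (integrable_const _).indicator hA'
  have hce : P[A.indicator (fun _ => (1:ℝ))|ℬ] = A.indicator fun _ => (1:ℝ) :=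
    condExp_of_stronglyMeasurable hℬ hsm hint
  filter_upwards [(hK.2 A hA').2] with ω hω
  rw [hce] at hω
  haveI := hK.1 ω
  by_cases hmem : ω ∈ A
  · have h1 : (K ω A).toReal = 1 := by simpa [Set.indicator_of_mem hmem] using hω
    rw [Set.indicator_of_mem hmem]
    have h2 := ENNReal.ofReal_toReal (measure_ne_top (K ω) A)
    rw [← h2, h1]; simp
  · have h1 : (K ω A).toReal = 0 := by simpa [Set.indicator_of_notMem hmem] using hω
    rw [Set.indicator_of_notMem hmem]
    have h2 := ENNReal.ofReal_toReal (measure_ne_top (K ω) A)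
    rw [← h2, h1]; simp

end StmtAux
namespace StmtAux

section Wass

variable {M : Type*} [MetricSpace M] [MeasurableSpace M] [BorelSpace M] {p : ℝ}

lemma aux_rpow_add_le (hp : 0 ≤ p) (a b : ℝ≥0∞) :
    (a + b) ^ p ≤ 2 ^ p * (a ^ p + b ^ p) := by
  have h1 : a + b ≤ 2 * (a ⊔ b) := by
    rw [two_mul]; exact add_le_add le_sup_left le_sup_right
  calc (a + b) ^ p ≤ (2 * (a ⊔ b)) ^ p := ENNReal.rpow_le_rpow h1 hp
    _ = 2 ^ p * (a ⊔ b) ^ p := ENNReal.mul_rpow_of_nonneg _ _ hp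
    _ ≤ 2 ^ p * (a ^ p + b ^ p) := by
        refine mul_le_mul_right ?_ _
        rcases le_total a b with h | h
        · rw [sup_eq_right.mpr h]; exact le_add_self
        · rw [sup_eq_left.mpr h]; exact le_self_add

lemma wassDist_le_coupling {μ ν : Measure M} {π : Measure (M × M)}
    (h : IsCoupling π μ ν) :
    wassDist p μ ν ≤ (∫⁻ xy, edist xy.1 xy.2 ^ p ∂π) ^ (1 / p) :=
  iInf_le_of_le π (iInf_le_of_le h le_rfl)

lemma wassDist_map_le {α : Type*} [MeasurableSpace α] (μ : Measure α) {f g : α → M}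
    (hf : Measurable f) (hg : Measurable g) (hp : 0 ≤ 1 / p) :
    wassDist p (μ.map f) (μ.map g) ≤ (∫⁻ a, edist (f a) (g a) ^ p ∂μ) ^ (1 / p) := by
  have hpair : Measurable fun a => (f a, g a) := hf.prodMk hg
  have hc : IsCoupling (μ.map fun a => (f a, g a)) (μ.map f) (μ.map g) := by
    constructor
    · rw [Measure.map_map measurable_fst hpair]; rfl
    · rw [Measure.map_map measurable_snd hpair]; rfl
  refine le_trans (wassDist_le_coupling hc) (ENNReal.rpow_le_rpow ?_ hp)
  exact lintegral_map_le _ _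

lemma hasFinitePMoment_dirac (hp0 : 0 ≤ p) (x : M) :
    HasFinitePMoment p (Measure.dirac x) := by
  intro z
  rw [lintegral_dirac]
  exact ENNReal.rpow_lt_top_of_nonneg hp0 (edist_ne_top z x)

lemma hasFinitePMoment_map {α : Type*} [MeasurableSpace α] (μ : Measure α)
    [IsProbabilityMeasure μ] {f : α → M} (hf : Measurable f) (hp0 : 0 ≤ p) (y₀ : M)
    (h : ∫⁻ a, edist y₀ (f a) ^ p ∂μ < ⊤) :
    HasFinitePMoment p (μ.map f) := by
  intro x
  have hbound : ∀ a, edist x (f a) ^ p ≤ 2 ^ p * (edist x y₀ ^ p + edist y₀ (f a) ^ p) :=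
    fun a =>
      le_trans (ENNReal.rpow_le_rpow (edist_triangle x y₀ (f a)) hp0) (aux_rpow_add_le hp0 _ _)
  have h2top : (2 : ℝ≥0∞) ^ p ≠ ⊤ := ENNReal.rpow_ne_top_of_nonneg hp0 (by norm_num)
  calc ∫⁻ y, edist x y ^ p ∂(μ.map f) ≤ ∫⁻ a, edist x (f a) ^ p ∂μ := lintegral_map_le _ _
    _ ≤ ∫⁻ a, 2 ^ p * (edist x y₀ ^ p + edist y₀ (f a) ^ p) ∂μ := lintegral_mono hbound
    _ = 2 ^ p * ∫⁻ a, edist x y₀ ^ p + edist y₀ (f a) ^ p ∂μ := lintegral_const_mul' _ _ h2top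
    _ = 2 ^ p * (edist x y₀ ^ p * (μ Set.univ) + ∫⁻ a, edist y₀ (f a) ^ p ∂μ) := by
        rw [lintegral_add_left measurable_const, lintegral_const]
    _ < ⊤ := by
        refine ENNReal.mul_lt_top h2top.lt_top (ENNReal.add_lt_top.mpr ⟨?_, h⟩)
        exact ENNReal.mul_lt_top (ENNReal.rpow_lt_top_of_nonneg hp0 (edist_ne_top _ _))
          (measure_lt_top _ _)

lemma concentrated_ae_eq {μ : Measure M} {x : M} (h : μ {x}ᶜ = 0) :
    ∀ᵐ y ∂μ, y = x := by
  rw [ae_iff]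
  simpa [Set.compl_def] using h

lemma hasFinitePMoment_concentrated {μ : Measure M} [IsProbabilityMeasure μ] {x : M}
    (h : μ {x}ᶜ = 0) (hp0 : 0 ≤ p) : HasFinitePMoment p μ := by
  intro z
  have : ∫⁻ y, edist z y ^ p ∂μ = ∫⁻ _, edist z x ^ p ∂μ := by
    refine lintegral_congr_ae ?_
    filter_upwards [concentrated_ae_eq h] with y hy
    rw [hy]
  rw [this, lintegral_const]
  exact ENNReal.mul_lt_top (ENNReal.rpow_lt_top_of_nonneg hp0 (edist_ne_top _ _))
    (measure_lt_top _ _)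

lemma wassDist_concentrated_dirac {μ : Measure M} [IsProbabilityMeasure μ] {x : M}
    (h : μ {x}ᶜ = 0) (hp0 : 0 < p) : wassDist p μ (Measure.dirac x) = 0 := by
  have hc : IsCoupling (μ.map fun y => (y, x)) μ (Measure.dirac x) := by
    have hm : Measurable fun y : M => (y, x) := measurable_id.prodMk measurable_const
    constructor
    · rw [Measure.map_map measurable_fst hm]
      simp [Function.comp_def]
    · rw [Measure.map_map measurable_snd hm]
      have h2 : (Prod.snd ∘ fun y : M => (y, x)) = fun _ : M => x := rfl
      rw [h2, Measure.map_const]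
      simp
  refine le_antisymm ?_ (zero_le)
  refine le_trans (wassDist_le_coupling hc) ?_
  have hcost : ∫⁻ xy, edist xy.1 xy.2 ^ p ∂(μ.map fun y => (y, x)) = 0 := by
    refine le_antisymm ?_ (zero_le)
    refine le_trans (lintegral_map_le _ _) ?_
    have : ∫⁻ y, edist y x ^ p ∂μ = 0 := by
      have : (fun y => edist y x ^ p) =ᵐ[μ] 0 := by
        filter_upwards [concentrated_ae_eq h] with y hy
        simp [hy, ENNReal.zero_rpow_of_pos hp0]
      rw [lintegral_congr_ae this]; simp
    exact le_of_eq this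
  rw [hcost, ENNReal.zero_rpow_of_pos (by positivity)]

end Wass

end StmtAux
namespace StmtAux

section Fwd

variable {Ω M : Type*} {ℬ : MeasurableSpace Ω} {mΩ : MeasurableSpace Ω}
  [MetricSpace M] [MeasurableSpace M] [BorelSpace M]
  {P : Measure Ω} {K : Ω → Measure Ω}

lemma K_map_concentrated (hℬ : ℬ ≤ mΩ) [IsProbabilityMeasure P]
    (hK : IsDisintegration P ℬ K) {ψ : Ω → M} (hψ : StronglyMeasurable[ℬ] ψ) :
    ∀ᵐ ω ∂P, ((K ω).map ψ) {ψ ω}ᶜ = 0 := by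
  classical
  have hψm : Measurable[ℬ] ψ := hψ.measurable
  have hψm' : Measurable[mΩ] ψ := hψm.mono hℬ le_rfl
  obtain ⟨T, hTc, hTsub⟩ := hψ.isSeparable_range
  haveI : Countable ↥T := hTc.to_subtype
  set B : ↥T × ℚ → Set M := fun i => Metric.ball (i.1 : M) (i.2 : ℝ) with hB
  set A : ↥T × ℚ → Set Ω := fun i => ψ ⁻¹' (B i) with hA
  have hAm : ∀ i, MeasurableSet[ℬ] (A i) := fun i => hψm measurableSet_ball
  have hae : ∀ᵐ ω ∂P, ∀ i, K ω (A i) = Set.indicator (A i) (fun _ => (1:ℝ≥0∞)) ω :=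
    ae_all_iff.mpr fun i => K_indicator hℬ hK (hAm i)
  filter_upwards [hae] with ω hω
  rw [Measure.map_apply hψm' (measurableSet_singleton (ψ ω)).compl]
  set S : ↥T × ℚ → Set Ω := fun i => if ψ ω ∈ B i then (∅ : Set Ω) else A i with hS
  have hsub : ψ ⁻¹' {ψ ω}ᶜ ⊆ ⋃ i, S i := by
    intro ω' hω'
    have hne : ψ ω' ≠ ψ ω := hω'
    have hd : 0 < dist (ψ ω) (ψ ω') := dist_pos.mpr (Ne.symm hne)
    obtain ⟨q, hq0, hq2⟩ := exists_rat_btwn (half_pos hd)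
    have hq0' : (0:ℝ) < q := by exact_mod_cast hq0
    have hmemcl : ψ ω' ∈ closure T := hTsub (Set.mem_range_self ω')
    obtain ⟨x, hxT, hxd⟩ := Metric.mem_closure_iff.mp hmemcl (q : ℝ) hq0'
    refine Set.mem_iUnion.mpr ⟨(⟨x, hxT⟩, q), ?_⟩
    have hin : ψ ω' ∈ B (⟨x, hxT⟩, q) := by
      simpa [hB, Metric.mem_ball] using hxd
    have hout : ψ ω ∉ B (⟨x, hxT⟩, q) := by
      simp only [hB, Metric.mem_ball]
      push_neg
      have h1 : dist (ψ ω) (ψ ω') ≤ dist (ψ ω) x + dist x (ψ ω') := dist_triangle _ _ _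
      have h2 : dist x (ψ ω') < q := by rwa [dist_comm]
      nlinarith [dist_nonneg (x := ψ ω) (y := x)]
    simp only [hS, if_neg hout]
    exact hin
  refine measure_mono_null hsub (measure_iUnion_null fun i => ?_)
  by_cases hmem : ψ ω ∈ B i
  · simp [hS, if_pos hmem]
  · have hωA : ω ∉ A i := fun hc => hmem hc
    simp only [hS, if_neg hmem]
    rw [hω i, Set.indicator_of_notMem hωA]

lemma condBary_of_meas (hℬ : ℬ ≤ mΩ) [IsProbabilityMeasure P]
    (hK : IsDisintegration P ℬ K) {p : ℝ} (hp : 1 ≤ p)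
    {β : Measure M → M} (hβ : IsBarycentric p β) {g ψ : Ω → M}
    (hψ : StronglyMeasurable[ℬ] ψ) (hgψ : g =ᵐ[P] ψ) :
    condBary β K g =ᵐ[P] g := by
  have hp0 : (0:ℝ) < p := lt_of_lt_of_le zero_lt_one hp
  have hψm' : Measurable[mΩ] ψ := hψ.measurable.mono hℬ le_rfl
  filter_upwards [map_congr_K hℬ hK hgψ, K_map_concentrated hℬ hK hψ, hgψ] with ω h1 h2 h3
  haveI := hK.1 ω
  haveI : IsProbabilityMeasure ((K ω).map ψ) :=
    Measure.isProbabilityMeasure_map hψm'.aemeasurable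
  have hmom : HasFinitePMoment p ((K ω).map ψ) :=
    hasFinitePMoment_concentrated h2 hp0.le
  have hW : wassDist p ((K ω).map ψ) (Measure.dirac (ψ ω)) = 0 :=
    wassDist_concentrated_dirac h2 hp0
  have hcon := hβ.contract ((K ω).map ψ) (Measure.dirac (ψ ω)) inferInstance inferInstance
    hmom (hasFinitePMoment_dirac hp0.le (ψ ω))
  rw [hW, hβ.map_dirac (ψ ω), nonpos_iff_eq_zero, edist_eq_zero] at hcon
  show β ((K ω).map g) = g ω
  rw [h1, hcon, h3]

end Fwd

end StmtAux
namespace StmtAux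

section Simplex

variable {M : Type*} [MetricSpace M] [MeasurableSpace M] [BorelSpace M] {p : ℝ}
variable {ι : Type*} [Fintype ι]

/-- Finite discrete measure with atoms `y` and weights `w`. -/
def TMeas (y : ι → M) (w : ι → ℝ≥0∞) : Measure M := ∑ i, w i • Measure.dirac (y i)

lemma lintegral_TMeas (y : ι → M) (w : ι → ℝ≥0∞) (f : M → ℝ≥0∞) :
    ∫⁻ z, f z ∂(TMeas y w) = ∑ i, w i * f (y i) := by
  rw [TMeas, lintegral_finset_sum_measure]
  refine Finset.sum_congr rfl fun i _ => ?_
  rw [lintegral_smul_measure, lintegral_dirac, smul_eq_mul]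

lemma TMeas_univ (y : ι → M) (w : ι → ℝ≥0∞) : TMeas y w Set.univ = ∑ i, w i := by
  rw [← lintegral_one, lintegral_TMeas]
  simp

lemma isProbabilityMeasure_TMeas {y : ι → M} {w : ι → ℝ≥0∞} (hw : ∑ i, w i = 1) :
    IsProbabilityMeasure (TMeas y w) := ⟨by rw [TMeas_univ, hw]⟩

lemma hasFinitePMoment_TMeas (hp0 : 0 ≤ p) {y : ι → M} {w : ι → ℝ≥0∞}
    (hw : ∀ i, w i ≠ ⊤) : HasFinitePMoment p (TMeas y w) := by
  intro x
  rw [lintegral_TMeas]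
  refine ENNReal.sum_lt_top.mpr fun i _ => ?_
  exact ENNReal.mul_lt_top (hw i).lt_top (ENNReal.rpow_lt_top_of_nonneg hp0 (edist_ne_top _ _))

lemma map_finset_sum {α β : Type*} [MeasurableSpace α] [MeasurableSpace β]
    {f : α → β} (hf : Measurable f) {γ : Type*} (s : Finset γ) (μ : γ → Measure α) :
    (∑ i ∈ s, μ i).map f = ∑ i ∈ s, (μ i).map f := by
  classical
  induction s using Finset.induction_on with
  | empty => simp
  | insert _ _ hni ih =>
      rw [Finset.sum_insert hni, Finset.sum_insert hni, Measure.map_add _ _ hf, ih]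

lemma edist_TMeas_le (hp : 1 ≤ p) {β : Measure M → M} (hβ : IsBarycentric p β)
    (y : ι → M) (w v : ι → ℝ≥0∞) (hw : ∑ i, w i = 1) (hv : ∑ i, v i = 1) :
    edist (β (TMeas y w)) (β (TMeas y v)) ≤
      ((∑ i, (w i - v i)) * (∑ i, ∑ j, edist (y i) (y j)) ^ p) ^ (1 / p) := by
  classical
  have hp0 : (0:ℝ) < p := lt_of_lt_of_le zero_lt_one hp
  have hwle : ∀ i, w i ≤ 1 := fun i => hw ▸ Finset.single_le_sum
    (f := w) (fun j _ => zero_le) (Finset.mem_univ i)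
  have hvle : ∀ i, v i ≤ 1 := fun i => hv ▸ Finset.single_le_sum
    (f := v) (fun j _ => zero_le) (Finset.mem_univ i)
  have hwt : ∀ i, w i ≠ ⊤ := fun i => ne_top_of_le_ne_top one_ne_top (hwle i)
  have hvt : ∀ i, v i ≠ ⊤ := fun i => ne_top_of_le_ne_top one_ne_top (hvle i)
  set m : ι → ℝ≥0∞ := fun i => min (w i) (v i) with hm
  set r : ι → ℝ≥0∞ := fun i => w i - v i with hr
  set s : ι → ℝ≥0∞ := fun i => v i - w i with hs
  have hmr : ∀ i, m i + r i = w i := by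
    intro i
    show w i ⊓ v i + (w i - v i) = w i
    rcases le_total (w i) (v i) with h | h
    · rw [inf_eq_left.mpr h, tsub_eq_zero_of_le h, add_zero]
    · rw [inf_eq_right.mpr h, add_comm, tsub_add_cancel_of_le h]
  have hms : ∀ i, m i + s i = v i := by
    intro i
    show w i ⊓ v i + (v i - w i) = v i
    rcases le_total (v i) (w i) with h | h
    · rw [inf_eq_right.mpr h, tsub_eq_zero_of_le h, add_zero]
    · rw [inf_eq_left.mpr h, add_comm, tsub_add_cancel_of_le h]
  set t : ℝ≥0∞ := ∑ i, r i with ht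
  have hmsum : ∑ i, m i ≠ ⊤ := by
    refine ENNReal.sum_lt_top.mpr (fun i _ => ?_) |>.ne
    exact lt_of_le_of_lt (min_le_left _ _) (hwt i).lt_top
  have hsum1 : ∑ i, m i + t = 1 := by
    rw [ht, ← Finset.sum_add_distrib]
    simp only [hmr]
    exact hw
  have hsum2 : ∑ i, m i + ∑ i, s i = 1 := by
    rw [← Finset.sum_add_distrib]
    simp only [hms]
    exact hv
  have hts : ∑ i, s i = t := by
    exact (ENNReal.add_right_inj hmsum).mp (hsum2.trans hsum1.symm)
  have htle : t ≤ 1 := by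
    rw [← hsum1]; exact le_add_self
  have htne : t ≠ ⊤ := ne_top_of_le_ne_top one_ne_top htle
  by_cases ht0 : t = 0
  · -- then w = v
    have hr0 : ∀ i, r i = 0 := by
      intro i
      have h0 : ∑ i, r i = 0 := by rw [← ht]; exact ht0
      exact Finset.sum_eq_zero_iff.mp h0 i (Finset.mem_univ i)
    have hs0 : ∀ i, s i = 0 := by
      intro i
      have h0 : ∑ i, s i = 0 := hts.trans ht0
      exact Finset.sum_eq_zero_iff.mp h0 i (Finset.mem_univ i)
    have hwv : w = v := by
      funext i
      exact le_antisymm (tsub_eq_zero_iff_le.mp (hr0 i)) (tsub_eq_zero_iff_le.mp (hs0 i))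
    rw [hwv, edist_self]
    exact zero_le
  · -- build coupling
    set D : ℝ≥0∞ := ∑ i, ∑ j, edist (y i) (y j) with hD
    have hDne : D ≠ ⊤ := by
      refine (ENNReal.sum_lt_top.mpr fun i _ => ENNReal.sum_lt_top.mpr fun j _ => ?_).ne
      exact (edist_ne_top _ _).lt_top
    have hedistD : ∀ i j, edist (y i) (y j) ≤ D := by
      intro i j
      refine le_trans ?_ (Finset.single_le_sum (f := fun i => ∑ j, edist (y i) (y j))
        (fun _ _ => zero_le) (Finset.mem_univ i))
      exact Finset.single_le_sum (f := fun j => edist (y i) (y j)) (fun _ _ => zero_le)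
        (Finset.mem_univ j)
    set π : Measure (M × M) :=
      (∑ i, m i • Measure.dirac (y i, y i)) +
        t⁻¹ • (∑ i, ∑ j, (r i * s j) • Measure.dirac (y i, y j)) with hπ
    have hcoup : IsCoupling π (TMeas y w) (TMeas y v) := by
      constructor
      · rw [hπ, Measure.map_add _ _ measurable_fst, Measure.map_smul,
          map_finset_sum measurable_fst, map_finset_sum measurable_fst]
        have e1 : ∀ i : ι, (m i • Measure.dirac (y i, y i)).map Prod.fst
            = m i • Measure.dirac (y i) := by
          intro i; rw [Measure.map_smul, Measure.map_dirac' measurable_fst]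
        have e2 : ∀ i : ι, ((∑ j, (r i * s j) • Measure.dirac (y i, y j)).map Prod.fst)
            = (r i * t) • Measure.dirac (y i) := by
          intro i
          rw [map_finset_sum measurable_fst]
          have : ∀ j : ι, ((r i * s j) • Measure.dirac (y i, y j)).map Prod.fst
              = (r i * s j) • Measure.dirac (y i) := by
            intro j; rw [Measure.map_smul, Measure.map_dirac' measurable_fst]
          simp only [this]
          rw [← Finset.sum_smul, ← Finset.mul_sum, hts]
        simp only [e1, e2]
        rw [Finset.smul_sum]
        have e3 : ∀ i : ι, t⁻¹ • ((r i * t) • Measure.dirac (y i)) = r i • Measure.dirac (y i) := by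
          intro i
          rw [smul_smul]
          congr 1
          rw [mul_comm (r i) t, ← mul_assoc, ENNReal.inv_mul_cancel ht0 htne, one_mul]
        simp only [e3]
        rw [TMeas, ← Finset.sum_add_distrib]
        refine Finset.sum_congr rfl fun i _ => ?_
        rw [← add_smul, hmr]
      · rw [hπ, Measure.map_add _ _ measurable_snd, Measure.map_smul,
          map_finset_sum measurable_snd, map_finset_sum measurable_snd]
        have e1 : ∀ i : ι, (m i • Measure.dirac (y i, y i)).map Prod.snd
            = m i • Measure.dirac (y i) := by
          intro i; rw [Measure.map_smul, Measure.map_dirac' measurable_snd]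
        have e2 : ∀ i : ι, ((∑ j, (r i * s j) • Measure.dirac (y i, y j)).map Prod.snd)
            = ∑ j, (r i * s j) • Measure.dirac (y j) := by
          intro i
          rw [map_finset_sum measurable_snd]
          refine Finset.sum_congr rfl fun j _ => ?_
          rw [Measure.map_smul, Measure.map_dirac' measurable_snd]
        simp only [e1, e2]
        rw [Finset.sum_comm]
        have e4 : ∀ j : ι, ∑ i, (r i * s j) • Measure.dirac (y j) = (t * s j) • Measure.dirac (y j) := by
          intro j
          rw [← Finset.sum_smul, ← Finset.sum_mul]
        simp only [e4]
        rw [Finset.smul_sum]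
        have e3 : ∀ j : ι, t⁻¹ • ((t * s j) • Measure.dirac (y j)) = s j • Measure.dirac (y j) := by
          intro j
          rw [smul_smul]
          congr 1
          rw [← mul_assoc, ENNReal.inv_mul_cancel ht0 htne, one_mul]
        simp only [e3]
        rw [TMeas, ← Finset.sum_add_distrib]
        refine Finset.sum_congr rfl fun j _ => ?_
        rw [← add_smul, hms]
    -- cost bound
    have hcost : ∫⁻ xy, edist xy.1 xy.2 ^ p ∂π ≤ t * D ^ p := by
      rw [hπ, lintegral_add_measure, lintegral_smul_measure,
        lintegral_finset_sum_measure]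
      have e1 : ∀ i : ι, ∫⁻ xy, edist xy.1 xy.2 ^ p ∂(m i • Measure.dirac (y i, y i)) = 0 := by
        intro i
        rw [lintegral_smul_measure, lintegral_dirac]
        simp [ENNReal.zero_rpow_of_pos hp0]
      simp only [e1, Finset.sum_const_zero, zero_add]
      have e2 : ∫⁻ xy, edist xy.1 xy.2 ^ p ∂(∑ i, ∑ j, (r i * s j) • Measure.dirac (y i, y j))
          ≤ t * (t * D ^ p) := by
        rw [lintegral_finset_sum_measure]
        have e3 : ∀ i : ι, ∫⁻ xy, edist xy.1 xy.2 ^ p ∂(∑ j, (r i * s j) • Measure.dirac (y i, y j))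
            ≤ r i * (t * D ^ p) := by
          intro i
          rw [lintegral_finset_sum_measure]
          have e5 : ∀ j : ι, ∫⁻ xy, edist xy.1 xy.2 ^ p ∂((r i * s j) • Measure.dirac (y i, y j))
              ≤ r i * s j * D ^ p := by
            intro j
            rw [lintegral_smul_measure, lintegral_dirac]
            exact mul_le_mul_right (ENNReal.rpow_le_rpow (hedistD i j) hp0.le) _
          refine le_trans (Finset.sum_le_sum fun j _ => e5 j) ?_
          rw [← Finset.sum_mul, ← Finset.mul_sum, hts, mul_assoc]
        refine le_trans (Finset.sum_le_sum fun i _ => e3 i) ?_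
        rw [← Finset.sum_mul]
      calc t⁻¹ * ∫⁻ xy, edist xy.1 xy.2 ^ p ∂(∑ i, ∑ j, (r i * s j) • Measure.dirac (y i, y j))
          ≤ t⁻¹ * (t * (t * D ^ p)) := mul_le_mul_right e2 _
        _ = t * D ^ p := by
            rw [← mul_assoc, ENNReal.inv_mul_cancel ht0 htne, one_mul]
    haveI := isProbabilityMeasure_TMeas (y := y) hw
    haveI := isProbabilityMeasure_TMeas (y := y) hv
    refine le_trans (hβ.contract _ _ inferInstance inferInstance
      (hasFinitePMoment_TMeas hp0.le hwt) (hasFinitePMoment_TMeas hp0.le hvt)) ?_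
    refine le_trans (wassDist_le_coupling hcoup) ?_
    exact ENNReal.rpow_le_rpow (le_trans hcost le_rfl) (by positivity)

end Simplex

end StmtAux
namespace StmtAux

section Cont

variable {M : Type*} [MetricSpace M] [MeasurableSpace M] [BorelSpace M] {p : ℝ}
variable {ι : Type*} [Fintype ι]

/-- The probability simplex on `ι`. -/
def simplexSet (ι : Type*) [Fintype ι] : Set (ι → ℝ≥0∞) := {w | ∑ i, w i = 1}

lemma mem_simplexSet {ι : Type*} [Fintype ι] {w : ι → ℝ≥0∞} :
    w ∈ simplexSet ι ↔ ∑ i, w i = 1 := Iff.rfl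

lemma continuous_bary_TMeas (hp : 1 ≤ p) {β : Measure M → M} (hβ : IsBarycentric p β)
    (y : ι → M) :
    Continuous fun w : ↥(simplexSet ι) => β (TMeas y (w : ι → ℝ≥0∞)) := by
  rw [continuous_iff_continuousAt]
  intro v
  rw [ContinuousAt, tendsto_iff_edist_tendsto_0]
  set D : ℝ≥0∞ := ∑ i, ∑ j, edist (y i) (y j) with hD
  have hDne : D ≠ ⊤ :=
    (ENNReal.sum_lt_top.mpr fun i _ =>
      ENNReal.sum_lt_top.mpr fun j _ => (edist_ne_top _ _).lt_top).ne
  have hDp : D ^ p ≠ ⊤ := ENNReal.rpow_ne_top_of_nonneg (le_trans zero_le_one hp) hDne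
  have hb : ∀ w : ↥(simplexSet ι),
      edist (β (TMeas y (w : ι → ℝ≥0∞))) (β (TMeas y (v : ι → ℝ≥0∞))) ≤
        ((∑ i, ((w : ι → ℝ≥0∞) i - (v : ι → ℝ≥0∞) i)) * D ^ p) ^ (1 / p) :=
    fun w => edist_TMeas_le hp hβ y _ _ (mem_simplexSet.mp w.2) (mem_simplexSet.mp v.2)
  have h1 : Tendsto (fun w : ↥(simplexSet ι) =>
      ∑ i, ((w : ι → ℝ≥0∞) i - (v : ι → ℝ≥0∞) i)) (𝓝 v) (𝓝 0) := by
    have hc : Continuous fun w : ↥(simplexSet ι) =>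
        ∑ i, ((w : ι → ℝ≥0∞) i - (v : ι → ℝ≥0∞) i) := by
      refine continuous_finset_sum _ fun i _ => ?_
      exact (ENNReal.continuous_sub_right _).comp
        ((continuous_apply i).comp continuous_subtype_val)
    have h2 := hc.tendsto v
    simpa using h2
  have h2 : Tendsto (fun x : ℝ≥0∞ => (x * D ^ p) ^ (1 / p)) (𝓝 0) (𝓝 0) := by
    have hm : Tendsto (fun x : ℝ≥0∞ => x * D ^ p) (𝓝 0) (𝓝 (0 * D ^ p)) :=
      ENNReal.Tendsto.mul_const tendsto_id (Or.inr hDp)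
    rw [zero_mul] at hm
    have hr : Tendsto (fun x : ℝ≥0∞ => x ^ (1 / p)) (𝓝 0) (𝓝 0) := by
      have := (ENNReal.continuous_rpow_const (y := 1 / p)).tendsto 0
      rwa [ENNReal.zero_rpow_of_pos (by positivity)] at this
    exact hr.comp hm
  exact tendsto_nhds_bot_mono' (h2.comp h1) hb

end Cont

section SFun

variable {Ω M : Type*} {ℬ : MeasurableSpace Ω} {mΩ : MeasurableSpace Ω}
  [MetricSpace M] [MeasurableSpace M] [BorelSpace M]
  {P : Measure Ω} {K : Ω → Measure Ω} {p : ℝ}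

lemma stronglyMeasurable_bary_simple [IsProbabilityMeasure P]
    (hK : IsDisintegration P ℬ K) (hp : 1 ≤ p)
    {β : Measure M → M} (hβ : IsBarycentric p β) (s : @SimpleFunc Ω mΩ M) :
    StronglyMeasurable[ℬ] fun ω => β ((K ω).map s) := by
  classical
  set F : Finset M := s.range with hF
  set y : ↥F → M := fun i => (i : M) with hy
  set wt : Ω → ↥F → ℝ≥0∞ := fun ω i => K ω (⇑s ⁻¹' {(i : M)}) with hwt
  have hK1 : ∀ ω, IsProbabilityMeasure (K ω) := hK.1
  have hwtm : Measurable[ℬ] wt :=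
    @measurable_pi_lambda Ω ↥F (fun _ => ℝ≥0∞) ℬ _ wt
      (fun i => measurable_K hK (s.measurableSet_fiber _))
  have hdisj : (↑F : Set M).PairwiseDisjoint fun z => ⇑s ⁻¹' {z} := by
    intro a _ b _ hab
    exact Disjoint.preimage _ (Set.disjoint_singleton.mpr hab)
  have hsum : ∀ ω, ∑ i, wt ω i = 1 := by
    intro ω
    haveI := hK1 ω
    rw [Finset.sum_coe_sort F (fun z => K ω (⇑s ⁻¹' {z}))]
    rw [← measure_biUnion_finset hdisj fun z _ => s.measurableSet_fiber z]
    have huniv : ⋃ z ∈ F, ⇑s ⁻¹' {z} = Set.univ := by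
      ext ω'
      simp only [Set.mem_iUnion, Set.mem_preimage, Set.mem_singleton_iff, Set.mem_univ,
        iff_true]
      exact ⟨s ω', s.mem_range_self ω', rfl⟩
    rw [huniv, measure_univ]
  have hmap : ∀ ω, (K ω).map ⇑s = TMeas y (wt ω) := by
    intro ω
    refine Measure.ext fun A hA => ?_
    rw [Measure.map_apply s.measurable hA, TMeas, Measure.finset_sum_apply]
    have e1 : ∀ i : ↥F, (wt ω i • Measure.dirac (y i)) A
        = wt ω i * Set.indicator A 1 (y i) := by
      intro i
      rw [Measure.smul_apply, Measure.dirac_apply' _ hA, smul_eq_mul]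
    rw [Finset.sum_congr rfl fun i _ => e1 i]
    rw [Finset.sum_coe_sort F (fun z => K ω (⇑s ⁻¹' {z}) * Set.indicator A 1 z)]
    have hdecomp : ⇑s ⁻¹' A = ⋃ z ∈ F.filter (· ∈ A), ⇑s ⁻¹' {z} := by
      ext ω'
      simp only [Set.mem_preimage, Set.mem_iUnion, Finset.mem_filter, Set.mem_singleton_iff]
      constructor
      · intro h
        exact ⟨s ω', ⟨⟨s.mem_range_self ω', h⟩, rfl⟩⟩
      · rintro ⟨z, ⟨⟨_, hzA⟩, hz⟩⟩
        rw [hz]; exact hzA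
    rw [hdecomp, measure_biUnion_finset (hdisj.subset (fun x hx => by
        simp only [Finset.coe_filter, Set.mem_setOf_eq] at hx
        exact hx.1))
      fun z _ => s.measurableSet_fiber z]
    rw [Finset.sum_filter]
    refine Finset.sum_congr rfl fun z _ => ?_
    by_cases hz : z ∈ A
    · rw [if_pos hz, Set.indicator_of_mem hz]; simp
    · rw [if_neg hz, Set.indicator_of_notMem hz]; simp
  have heq : (fun ω => β ((K ω).map ⇑s)) =
      (fun w : {w : ↥F → ℝ≥0∞ // ∑ i, w i = 1} => β (TMeas y (w : ↥F → ℝ≥0∞)))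
        ∘ (fun ω => (⟨wt ω, hsum ω⟩ : {w : ↥F → ℝ≥0∞ // ∑ i, w i = 1})) := by
    funext ω
    simp only [Function.comp_apply]
    rw [hmap ω]
  haveI : OpensMeasurableSpace ↥(simplexSet ↥F) := Subtype.opensMeasurableSpace _
  rw [heq, stronglyMeasurable_iff_measurable_separable]
  refine ⟨(continuous_bary_TMeas hp hβ y).measurable.comp (hwtm.subtype_mk), ?_⟩
  exact TopologicalSpace.IsSeparable.mono
    (TopologicalSpace.isSeparable_range (continuous_bary_TMeas hp hβ y))
    (Set.range_comp_subset_range _ _)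

end SFun

end StmtAux
namespace StmtAux

section Main

variable {Ω M : Type*} {ℬ : MeasurableSpace Ω} {mΩ : MeasurableSpace Ω}
  [MetricSpace M] [MeasurableSpace M] [BorelSpace M] [CompleteSpace M]
  {P : Measure Ω} {K : Ω → Measure Ω} {p : ℝ}

lemma lintegral_lintegral_K (hℬ : ℬ ≤ mΩ) [IsProbabilityMeasure P]
    (hK : IsDisintegration P ℬ K) {f : Ω → ℝ≥0∞} (hf : Measurable[mΩ] f) :
    ∫⁻ ω, ∫⁻ ω', f ω' ∂(K ω) ∂P = ∫⁻ ω', f ω' ∂P := by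
  have hKm : Measurable[mΩ] K := Measure.measurable_of_measurable_coe K
    (fun A hA => ((measurable_K hK hA).mono hℬ le_rfl))
  have hbind : P.bind K = P := by
    refine Measure.ext fun A hA => ?_
    rw [Measure.bind_apply hA hKm.aemeasurable]
    exact lintegral_K hℬ hK hA
  rw [← Measure.lintegral_bind hKm.aemeasurable hf.aemeasurable, hbind]

lemma exists_SM_version (hℬ : ℬ ≤ mΩ) [IsProbabilityMeasure P]
    (hK : IsDisintegration P ℬ K) (hp : 1 ≤ p)
    {β : Measure M → M} (hβ : IsBarycentric p β)
    {φ : Ω → M} (hφ : PIntegrable p P φ) :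
    ∃ ψ : Ω → M, StronglyMeasurable[ℬ] ψ ∧ condBary β K φ =ᵐ[P] ψ := by
  classical
  have hp0 : (0:ℝ) < p := lt_of_lt_of_le zero_lt_one hp
  have hKm : Measurable[mΩ] K := Measure.measurable_of_measurable_coe K
    (fun A hA => ((measurable_K hK hA).mono hℬ le_rfl))
  have hΩ : Nonempty Ω := by
    by_contra h
    rw [not_nonempty_iff] at h
    have h1 := measure_univ (μ := P)
    rw [Set.univ_eq_empty_iff.mpr h, measure_empty] at h1
    exact zero_ne_one h1
  obtain ⟨ω₀⟩ := hΩ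
  set φ' := hφ.1.mk φ with hφ'def
  have hφ'sm : StronglyMeasurable[mΩ] φ' := hφ.1.stronglyMeasurable_mk
  have hφφ' : φ =ᵐ[P] φ' := hφ.1.ae_eq_mk
  have hφ'm : Measurable[mΩ] φ' := hφ'sm.measurable
  set y₀ : M := φ' ω₀ with hy₀def
  set sC : Set M := closure (Set.range φ') with hsC
  haveI : TopologicalSpace.SeparableSpace ↥sC :=
    (hφ'sm.isSeparable_range.closure).separableSpace
  have hy₀ : y₀ ∈ sC := subset_closure (Set.mem_range_self ω₀)
  set sfn : ℕ → @SimpleFunc Ω mΩ M := fun n => SimpleFunc.approxOn φ' hφ'm sC y₀ hy₀ n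
    with hsfn
  -- the `p`-th moment of `φ'` relative to `y₀`
  have hgmeas : Measurable[mΩ] fun ω' => edist y₀ (φ' ω') ^ p :=
    ((ENNReal.continuous_rpow_const.comp
      (continuous_const.edist continuous_id)).measurable).comp hφ'm
  have hmomP : ∫⁻ ω', edist y₀ (φ' ω') ^ p ∂P < ⊤ := by
    have h2 := hφ.2 y₀
    have he : (fun ω => edist y₀ (φ ω) ^ p) =ᵐ[P] fun ω => edist y₀ (φ' ω) ^ p := by
      filter_upwards [hφφ'] with ω hω
      rw [hω]
    rwa [lintegral_congr_ae he] at h2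
  have hmm : Measurable[mΩ] fun ω => ∫⁻ ω', edist y₀ (φ' ω') ^ p ∂(K ω) :=
    (Measure.measurable_lintegral hgmeas).comp hKm
  have haefin : ∀ᵐ ω ∂P, ∫⁻ ω', edist y₀ (φ' ω') ^ p ∂(K ω) < ⊤ := by
    refine ae_lt_top hmm ?_
    rw [lintegral_lintegral_K hℬ hK hgmeas]
    exact hmomP.ne
  set ψn : ℕ → Ω → M := fun n ω => β ((K ω).map (sfn n)) with hψn
  have hψnm : ∀ n, StronglyMeasurable[ℬ] (ψn n) := fun n =>
    stronglyMeasurable_bary_simple hK hp hβ (sfn n)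
  -- a.e. convergence of `ψn` to `condBary β K φ'`
  have hconv : ∀ᵐ ω ∂P, Tendsto (fun n => ψn n ω) atTop (𝓝 (β ((K ω).map φ'))) := by
    filter_upwards [haefin] with ω hfin
    haveI := hK.1 ω
    have hmomφ' : HasFinitePMoment p ((K ω).map φ') :=
      hasFinitePMoment_map _ hφ'm hp0.le y₀ hfin
    haveI : IsProbabilityMeasure ((K ω).map φ') := Measure.isProbabilityMeasure_map hφ'm.aemeasurable
    have hbnd : ∀ n, edist (ψn n ω) (β ((K ω).map φ'))
        ≤ (∫⁻ ω', edist (sfn n ω') (φ' ω') ^ p ∂(K ω)) ^ (1 / p) := by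
      intro n
      haveI : IsProbabilityMeasure ((K ω).map (sfn n)) :=
        Measure.isProbabilityMeasure_map ((sfn n).measurable.aemeasurable)
      have hmomn : HasFinitePMoment p ((K ω).map (sfn n)) := by
        refine hasFinitePMoment_map _ (sfn n).measurable hp0.le y₀ ?_
        have hb : ∀ ω', edist y₀ (sfn n ω') ^ p
            ≤ 2 ^ p * (edist y₀ (φ' ω') ^ p + edist y₀ (φ' ω') ^ p) := by
          intro ω'
          have h1 : edist y₀ (sfn n ω') ≤ edist y₀ (φ' ω') + edist (φ' ω') (sfn n ω') :=
            edist_triangle _ _ _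
          have h2 : edist (φ' ω') (sfn n ω') ≤ edist y₀ (φ' ω') := by
            rw [edist_comm]
            exact SimpleFunc.edist_approxOn_le hφ'm hy₀ ω' n
          refine le_trans (ENNReal.rpow_le_rpow (le_trans h1 (add_le_add le_rfl h2)) hp0.le) ?_
          exact aux_rpow_add_le hp0.le _ _
        refine lt_of_le_of_lt (lintegral_mono hb) ?_
        rw [lintegral_const_mul' _ _ (ENNReal.rpow_ne_top_of_nonneg hp0.le (by norm_num))]
        refine ENNReal.mul_lt_top (ENNReal.rpow_ne_top_of_nonneg hp0.le (by norm_num)).lt_top ?_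
        rw [lintegral_add_left hgmeas]
        exact ENNReal.add_lt_top.mpr ⟨hfin, hfin⟩
      refine le_trans (hβ.contract _ _ inferInstance inferInstance hmomn hmomφ') ?_
      exact wassDist_map_le (K ω) (sfn n).measurable hφ'm (by positivity)
    have hFmeas : ∀ n, Measurable[mΩ] fun ω' => edist (sfn n ω') (φ' ω') ^ p := by
      intro n
      have h1 : Measurable[mΩ] fun ω' => dist (sfn n ω') (φ' ω') :=
        ((sfn n).stronglyMeasurable.dist hφ'sm).measurable
      have h2 : (fun ω' => edist (sfn n ω') (φ' ω') ^ p)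
          = fun ω' => (ENNReal.ofReal (dist (sfn n ω') (φ' ω'))) ^ p := by
        funext ω'
        rw [edist_dist]
      rw [h2]
      exact (ENNReal.continuous_rpow_const.measurable).comp
        (ENNReal.measurable_ofReal.comp h1)
    have hcost : Tendsto (fun n => ∫⁻ ω', edist (sfn n ω') (φ' ω') ^ p ∂(K ω)) atTop
        (𝓝 0) := by
      have h0 : (0:ℝ≥0∞) = ∫⁻ _ω', (0:ℝ≥0∞) ∂(K ω) := by simp
      rw [h0]
      refine tendsto_lintegral_of_dominated_convergence (fun ω' => edist y₀ (φ' ω') ^ p)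
        hFmeas ?_ hfin.ne ?_
      · intro n
        refine Filter.Eventually.of_forall fun ω' => ?_
        refine ENNReal.rpow_le_rpow ?_ hp0.le
        exact SimpleFunc.edist_approxOn_le hφ'm hy₀ ω' n
      · refine Filter.Eventually.of_forall fun ω' => ?_
        have ht : Tendsto (fun n => sfn n ω') atTop (𝓝 (φ' ω')) :=
          SimpleFunc.tendsto_approxOn hφ'm hy₀ (subset_closure (subset_closure (Set.mem_range_self ω')))
        have ht2 : Tendsto (fun n => edist (sfn n ω') (φ' ω')) atTop (𝓝 0) :=
          tendsto_iff_edist_tendsto_0.mp ht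
        have ht3 := (ENNReal.continuous_rpow_const (y := p)).tendsto 0
        rw [ENNReal.zero_rpow_of_pos hp0] at ht3
        exact ht3.comp ht2
    have hcost2 : Tendsto (fun n => (∫⁻ ω', edist (sfn n ω') (φ' ω') ^ p ∂(K ω)) ^ (1 / p))
        atTop (𝓝 0) := by
      have h3 := (ENNReal.continuous_rpow_const (y := 1 / p)).tendsto 0
      rw [ENNReal.zero_rpow_of_pos (by positivity)] at h3
      exact h3.comp hcost
    rw [tendsto_iff_edist_tendsto_0]
    exact tendsto_nhds_bot_mono' hcost2 hbnd
  -- the set where `ψn` converges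
  set C : Set Ω := {ω | CauchySeq fun n => ψn n ω} with hCdef
  have hCm : MeasurableSet[ℬ] C := by
    have hC2 : C = ⋂ k : ℕ, ⋃ N : ℕ, ⋂ m ≥ N, ⋂ n ≥ N,
        {ω | dist (ψn m ω) (ψn n ω) < 1 / (k + 1)} := by
      ext ω
      simp only [hCdef, Set.mem_setOf_eq, Set.mem_iInter, Set.mem_iUnion]
      constructor
      · intro h k
        obtain ⟨N, hN⟩ := Metric.cauchySeq_iff.mp h (1 / ((k:ℝ) + 1)) (by positivity)
        exact ⟨N, fun m hm => fun n hn => hN m hm n hn⟩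
      · intro h
        rw [Metric.cauchySeq_iff]
        intro ε hε
        obtain ⟨k, hk⟩ := exists_nat_one_div_lt hε
        obtain ⟨N, hN⟩ := h k
        refine ⟨N, fun m hm n hn => ?_⟩
        have := hN m hm
        have h5 := this n hn
        calc dist (ψn m ω) (ψn n ω) < 1 / ((k:ℝ) + 1) := h5
          _ < ε := hk
      
    rw [hC2]
    refine MeasurableSet.iInter fun k => ?_
    refine MeasurableSet.iUnion fun N => ?_
    refine MeasurableSet.iInter fun m => ?_
    refine MeasurableSet.iInter fun _ => ?_
    refine MeasurableSet.iInter fun n => ?_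
    refine MeasurableSet.iInter fun _ => ?_
    have hd : Measurable[ℬ] fun ω => dist (ψn m ω) (ψn n ω) :=
      ((hψnm m).dist (hψnm n)).measurable
    exact measurableSet_lt hd measurable_const
  haveI : Nonempty M := ⟨y₀⟩
  set ψ : Ω → M := fun ω => if ω ∈ C then limUnder atTop (fun n => ψn n ω) else y₀
    with hψdef
  have hψsm : StronglyMeasurable[ℬ] ψ := by
    have hfn : ∀ n, StronglyMeasurable[ℬ] (C.piecewise (ψn n) fun _ => y₀) := fun n =>
      (hψnm n).piecewise hCm stronglyMeasurable_const
    refine stronglyMeasurable_of_tendsto atTop hfn ?_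
    rw [tendsto_pi_nhds]
    intro ω
    by_cases hω : ω ∈ C
    · have hlim : ∃ c, Tendsto (fun n => ψn n ω) atTop (𝓝 c) :=
        cauchySeq_tendsto_of_complete hω
      have h1 : Tendsto (fun n => ψn n ω) atTop (𝓝 (limUnder atTop fun n => ψn n ω)) :=
        tendsto_nhds_limUnder hlim
      simp only [hψdef, if_pos hω]
      refine h1.congr fun n => ?_
      rw [Set.piecewise_eq_of_mem _ _ _ hω]
    · simp only [hψdef, if_neg hω]
      have h1 : ∀ n, C.piecewise (ψn n) (fun _ => y₀) ω = y₀ :=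
        fun n => Set.piecewise_eq_of_notMem _ _ _ hω
      simp only [h1]
      exact tendsto_const_nhds
  refine ⟨ψ, hψsm, ?_⟩
  filter_upwards [hconv, map_congr_K hℬ hK hφφ'] with ω hω hmapeq
  have hωC : ω ∈ C := hω.cauchySeq
  have h1 : Tendsto (fun n => ψn n ω) atTop (𝓝 (ψ ω)) := by
    simp only [hψdef, if_pos hωC]
    exact tendsto_nhds_limUnder ⟨_, hω⟩
  have h2 : β ((K ω).map φ') = ψ ω := tendsto_nhds_unique hω h1
  show β ((K ω).map φ) = ψ ω
  rw [hmapeq, h2]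

end Main

end StmtAux

theorem stmt9 [mΩ : MeasurableSpace Ω] [StandardBorelSpace Ω]
    [MetricSpace M] [CompleteSpace M] [MeasurableSpace M] [BorelSpace M]
    (P : MeasureTheory.Measure Ω) [MeasureTheory.IsProbabilityMeasure P]
    (ℬ : MeasurableSpace Ω) (hℬ : ℬ ≤ mΩ)
    (K : Ω → @MeasureTheory.Measure Ω mΩ) (hK : IsDisintegration P ℬ K)
    (p : ℝ) (hp : 1 ≤ p) (β : MeasureTheory.Measure M → M) (hβ : IsBarycentric p β)
    (φ : Ω → M) (hφ : PIntegrable p P φ) :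
    ((∃ ψ : Ω → M, (@MeasureTheory.StronglyMeasurable Ω M _ ℬ ψ) ∧ φ =ᵐ[P] ψ) ↔
      condBary β K φ =ᵐ[P] φ) ∧
    condBary β K (condBary β K φ) =ᵐ[P] condBary β K φ := by
  constructor
  · constructor
    · rintro ⟨ψ, hψ, hφψ⟩
      exact StmtAux.condBary_of_meas hℬ hK hp hβ hψ hφψ
    · intro hc
      obtain ⟨ψ, hψ, heq⟩ := StmtAux.exists_SM_version hℬ hK hp hβ hφ
      exact ⟨ψ, hψ, hc.symm.trans heq⟩
  · obtain ⟨ψ, hψ, heq⟩ := StmtAux.exists_SM_version hℬ hK hp hβ hφ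
    exact StmtAux.condBary_of_meas hℬ hK hp hβ hψ heq
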